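/- For a weak composition s of length n, the map sending an s-decreasing tree to its multiset of tree-inversions is a bijection between s-decreasing trees and s-tree-inversion sets. -/

import Mathlib

/-- Planar rooted trees: leaves are unlabeled; internal nodes carry a natural
number label and an ordered list of children. -/
inductive STree : Type where
  | leaf : STree
  | node : ℕ → List STree → STree

namespace STree

mutual
  /-- `x` occurs as the label of an internal node of the tree. -/
  def mem (x : ℕ) : STree → Bool
    | .leaf => false
    | .node a cs => x == a || memL x cs
  def memL (x : ℕ) : List STree → Bool
    | [] => false
    | t :: ts => mem x t || memL x ts
end

mutual
  /-- The list of internal node labels, in preorder. -/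
  def labels : STree → List ℕ
    | .leaf => []
    | .node a cs => a :: labelsL cs
  def labelsL : List STree → List ℕ
    | [] => []
    | t :: ts => labels t ++ labelsL ts
end

mutual
  /-- Local well-formedness for the signature `s` : an internal node labeled `a`
  has `s a + 1` children, and all labels below it are smaller than `a`. -/
  def wf (s : ℕ → ℕ) : STree → Prop
    | .leaf => True
    | .node a cs => cs.length = s a + 1 ∧ (∀ b ∈ labelsL cs, b < a) ∧ wfL s cs
  def wfL (s : ℕ → ℕ) : List STree → Prop
    | [] => True
    | t :: ts => wf s t ∧ wfL s ts
end

/-- `T` is an `s`-decreasing tree: its internal nodes are labeled bijectively by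
`1, …, n`, node `i` has `s i + 1` ordered children, and all descendants of a node
have smaller labels. -/
def IsSDecreasingTree (n : ℕ) (s : ℕ → ℕ) (T : STree) : Prop :=
  wf s T ∧ (labels T).Perm (List.range' 1 n)

/-- Index of the first tree of the list containing the label `x`. -/
def idxOf (x : ℕ) : List STree → ℕ
  | [] => 0
  | t :: ts => if mem x t then 0 else idxOf x ts + 1

mutual
  /-- The cardinality `card_T(y,x)` of the pair `(y,x)` in the tree:
  `0` if `x` is (weakly) left of `y`, `i` if `x` lies in the `i`-th child
  subtree of `y`, and `s y` if `x` is right of `y`. -/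
  def card (s : ℕ → ℕ) (y x : ℕ) : STree → ℕ
    | .leaf => 0
    | .node a cs => if a = y then idxOf x cs else cardL s y x cs
  def cardL (s : ℕ → ℕ) (y x : ℕ) : List STree → ℕ
    | [] => 0
    | t :: ts =>
      if mem y t then
        (if mem x t then card s y x t else if memL x ts then s y else 0)
      else (if mem x t then 0 else cardL s y x ts)
end

/-- The tree-inversion multiset of `T`, as a multiplicity function on pairs
`(y,x)` with `1 ≤ x < y ≤ n`. -/
def treeInv (n : ℕ) (s : ℕ → ℕ) (T : STree) : ℕ → ℕ → ℕ := fun y x =>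
  if 1 ≤ x ∧ x < y ∧ y ≤ n then card s y x T else 0

/-- A multi inversion set on `1, …, n` bounded by the weak composition `s`. -/
def IsMultiInvSet (n : ℕ) (s : ℕ → ℕ) (I : ℕ → ℕ → ℕ) : Prop :=
  (∀ y x, I y x ≤ s y) ∧ ∀ y x, ¬(1 ≤ x ∧ x < y ∧ y ≤ n) → I y x = 0

/-- Transitivity: for `a < b < c`, `card(c,b) = i` implies `card(b,a) = 0` or
`card(c,a) ≥ i`. -/
def InvTransitive (I : ℕ → ℕ → ℕ) : Prop :=
  ∀ a b c : ℕ, a < b → b < c → I b a = 0 ∨ I c b ≤ I c a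

/-- Planarity: for `a < b < c`, `card(c,a) = i` implies `card(b,a) = s b` or
`card(c,b) ≥ i`. -/
def InvPlanar (s : ℕ → ℕ) (I : ℕ → ℕ → ℕ) : Prop :=
  ∀ a b c : ℕ, a < b → b < c → I b a = s b ∨ I c a ≤ I c b

/-- An `s`-tree-inversion set: a bounded multi inversion set that is transitive
and planar. -/
def IsTreeInvSet (n : ℕ) (s : ℕ → ℕ) (I : ℕ → ℕ → ℕ) : Prop :=
  IsMultiInvSet n s I ∧ InvTransitive I ∧ InvPlanar s I

/-- Inclusion of multi inversion sets: pointwise comparison of multiplicities. -/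
def invLE (I J : ℕ → ℕ → ℕ) : Prop := ∀ y x, I y x ≤ J y x

/-- The `s`-weak order: inclusion of tree-inversion multisets. -/
def sWeakLE (n : ℕ) (s : ℕ → ℕ) (T R : STree) : Prop :=
  invLE (treeInv n s T) (treeInv n s R)

/-- Union of multi inversion sets: pointwise maximum. -/
def invUnion (I J : ℕ → ℕ → ℕ) : ℕ → ℕ → ℕ := fun y x => max (I y x) (J y x)

/-- Transitive closure: `tc I (c,a)` is the maximal value of `I (b₁, b₂)` over
all transitivity paths `c = b₁ > b₂ > … > b_k = a` (consecutive entries have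
positive multiplicity). -/
noncomputable def tc (I : ℕ → ℕ → ℕ) : ℕ → ℕ → ℕ := fun c a =>
  sSup {v | ∃ (b : ℕ) (l : List ℕ),
    List.Chain (fun u w => w < u ∧ 0 < I u w) c (b :: l) ∧
    (b :: l).getLast (List.cons_ne_nil b l) = a ∧ v = I c b}

/-- Adding the inversion `(c,a)`: increase its multiplicity by one. -/
def addInv (I : ℕ → ℕ → ℕ) (c a : ℕ) : ℕ → ℕ → ℕ := fun y x =>
  if y = c ∧ x = a then I y x + 1 else I y x

mutual
  /-- `a` is a (proper) descendant of the node labeled `c`. -/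
  def descIn (c a : ℕ) : STree → Bool
    | .leaf => false
    | .node b cs => (b == c && memL a cs) || descInL c a cs
  def descInL (c a : ℕ) : List STree → Bool
    | [] => false
    | t :: ts => descIn c a t || descInL c a ts
end

mutual
  /-- `a` belongs to the rightmost child subtree of the node labeled `c`. -/
  def inRight (c a : ℕ) : STree → Bool
    | .leaf => false
    | .node b cs =>
      (b == c && (match cs.getLast? with
        | some t => mem a t
        | none => false)) || inRightL c a cs
  def inRightL (c a : ℕ) : List STree → Bool
    | [] => false
    | t :: ts => inRight c a t || inRightL c a ts
end

mutual
  /-- `a` belongs to the leftmost child subtree of the node labeled `c`. -/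
  def inLeft (c a : ℕ) : STree → Bool
    | .leaf => false
    | .node b cs =>
      (b == c && (match cs.head? with
        | some t => mem a t
        | none => false)) || inLeftL c a cs
  def inLeftL (c a : ℕ) : List STree → Bool
    | [] => false
    | t :: ts => inLeft c a t || inLeftL c a ts
end

mutual
  /-- The rightmost child subtree of the node labeled `a` is empty (a leaf). -/
  def rightEmpty (a : ℕ) : STree → Bool
    | .leaf => false
    | .node b cs =>
      (b == a && (match cs.getLast? with
        | some .leaf => true
        | _ => false)) || rightEmptyL a cs
  def rightEmptyL (a : ℕ) : List STree → Bool
    | [] => false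
    | t :: ts => rightEmpty a t || rightEmptyL a ts
end

/-- `(a,c)` is a tree-ascent of `T`: `a` is a descendant of `c`, not in the
rightmost subtree of `c`; `a` lies in the rightmost subtree of any `b` with
`a < b < c` having `a` as a descendant; and if `s a > 0` the rightmost
(strict right) subtree of `a` is empty. -/
def IsTreeAscent (s : ℕ → ℕ) (T : STree) (a c : ℕ) : Prop :=
  a < c ∧ descIn c a T = true ∧ inRight c a T = false ∧
  (∀ b : ℕ, a < b → b < c → descIn b a T = true → inRight b a T = true) ∧
  (0 < s a → rightEmpty a T = true)

/-- `a` is the root label of the tree. -/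
def hasRoot (a : ℕ) : STree → Bool
  | .leaf => false
  | .node b _ => a == b

mutual
  /-- `a` is a direct child of the node `c`, but not its rightmost child. -/
  def nonRightChild (c a : ℕ) : STree → Bool
    | .leaf => false
    | .node b cs => (b == c && cs.dropLast.any (hasRoot a)) || nonRightChildL c a cs
  def nonRightChildL (c a : ℕ) : List STree → Bool
    | [] => false
    | t :: ts => nonRightChild c a t || nonRightChildL c a ts
end

/-- `(a,c)` is a Tamari-ascent of `T`: `a` is a non-right child of `c`. -/
def IsTamariAscent (T : STree) (a c : ℕ) : Prop :=
  a < c ∧ nonRightChild c a T = true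

mutual
  /-- Horizontal mirror image of a tree: the order of children is reversed at
  every internal node. -/
  def mirror : STree → STree
    | .leaf => .leaf
    | .node a cs => .node a (mirrorL cs)
  def mirrorL : List STree → List STree
    | [] => []
    | t :: ts => mirrorL ts ++ [mirror t]
end

/-- `T` is an `s`-Tamari tree: `card(c,a) ≤ card(c,b)` for all `a < b < c`. -/
def TamariProp (n : ℕ) (s : ℕ → ℕ) (T : STree) : Prop :=
  ∀ a b c : ℕ, a < b → b < c → treeInv n s T c a ≤ treeInv n s T c b

/-- `T` is an `s`-maximal-Tamari tree: `card(b,a) = s b` implies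
`card(c,a) = s c` for all `c > b`. -/
def MaxTamariProp (n : ℕ) (s : ℕ → ℕ) (T : STree) : Prop :=
  ∀ a b c : ℕ, 1 ≤ a → a < b → b < c → c ≤ n →
    treeInv n s T b a = s b → treeInv n s T c a = s c

/-- The projection `π↓` on inversion sets:
`card_Q(c,a) = min { card_T(c,b) : a ≤ b < c }`. -/
noncomputable def pidownInv (n : ℕ) (s : ℕ → ℕ) (T : STree) : ℕ → ℕ → ℕ :=
  fun c a => sInf {v | ∃ b : ℕ, a ≤ b ∧ b < c ∧ v = treeInv n s T c b}

open scoped Classical in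
/-- The projection `π↑` on inversion sets: `card_R(c,a) = s c` if there is
`a < b < c` with `card_T(b,a) = s b`, and `card_R(c,a) = card_T(c,a)` otherwise. -/
noncomputable def piupInv (n : ℕ) (s : ℕ → ℕ) (T : STree) : ℕ → ℕ → ℕ :=
  fun c a =>
    if 1 ≤ a ∧ a < c ∧ c ≤ n then
      if ∃ b : ℕ, a < b ∧ b < c ∧ treeInv n s T b a = s b then s c
      else treeInv n s T c a
    else 0

end STree
namespace STree

mutual
  theorem mem_iff : ∀ (x : ℕ) (T : STree), mem x T = true ↔ x ∈ labels T
    | x, .leaf => by simp [mem, labels]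
    | x, .node a cs => by
        rw [show mem x (.node a cs) = (x == a || memL x cs) from rfl]
        simp [labels, memL_iff x cs]
  theorem memL_iff : ∀ (x : ℕ) (cs : List STree), memL x cs = true ↔ x ∈ labelsL cs
    | x, [] => by simp [memL, labelsL]
    | x, t :: ts => by
        rw [show memL x (t :: ts) = (mem x t || memL x ts) from rfl]
        simp [labelsL, mem_iff x t, memL_iff x ts]
end

end STree

namespace STree

theorem labelsL_append : ∀ l₁ l₂ : List STree, labelsL (l₁ ++ l₂) = labelsL l₁ ++ labelsL l₂
  | [], l₂ => by simp [labelsL]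
  | t :: ts, l₂ => by
      rw [List.cons_append, show labelsL (t :: (ts ++ l₂)) = labels t ++ labelsL (ts ++ l₂) from rfl,
        labelsL_append ts l₂]
      simp [labelsL]

theorem eq_leaf_of_labels_nil : ∀ {T : STree}, labels T = [] → T = .leaf
  | .leaf, _ => rfl
  | .node a cs, h => by simp [labels] at h

theorem idxOf_lt_length {x : ℕ} : ∀ {cs : List STree}, memL x cs = true → idxOf x cs < cs.length
  | [], h => by simp [memL] at h
  | t :: ts, h => by
      rw [show memL x (t :: ts) = (mem x t || memL x ts) from rfl] at h
      rw [idxOf]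
      by_cases hm : mem x t
      · simp [hm]
      · simp [hm] at h ⊢
        exact idxOf_lt_length h

theorem mem_get_idxOf {x : ℕ} : ∀ {cs : List STree} (h : memL x cs = true),
    mem x (cs.get ⟨idxOf x cs, idxOf_lt_length h⟩) = true
  | [], h => by simp [memL] at h
  | t :: ts, h => by
      rw [show memL x (t :: ts) = (mem x t || memL x ts) from rfl] at h
      by_cases hm : mem x t
      · simp only [idxOf, hm, if_true]; exact hm
      · simp [hm] at h
        have := mem_get_idxOf (cs := ts) h
        simp only [idxOf, hm, if_false]
        simpa using this

theorem memL_of_mem_get {x : ℕ} : ∀ {cs : List STree} {j : ℕ} (h : j < cs.length),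
    mem x (cs.get ⟨j, h⟩) = true → memL x cs = true
  | [], j, h, _ => by simp at h
  | t :: ts, 0, h, hm => by
      rw [show memL x (t :: ts) = (mem x t || memL x ts) from rfl]
      simp at hm; simp [hm]
  | t :: ts, j + 1, h, hm => by
      rw [show memL x (t :: ts) = (mem x t || memL x ts) from rfl]
      have := memL_of_mem_get (cs := ts) (j := j) (Nat.lt_of_succ_lt_succ h) (by simpa using hm)
      simp [this]

theorem labels_get_sublist : ∀ {cs : List STree} {j : ℕ} (h : j < cs.length),
    (labels (cs.get ⟨j, h⟩)).Sublist (labelsL cs)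
  | [], j, h => by simp at h
  | t :: ts, 0, h => by
      rw [show labelsL (t :: ts) = labels t ++ labelsL ts from rfl]
      simpa using List.sublist_append_left _ _
  | t :: ts, j + 1, h => by
      rw [show labelsL (t :: ts) = labels t ++ labelsL ts from rfl]
      have := labels_get_sublist (cs := ts) (j := j) (Nat.lt_of_succ_lt_succ h)
      exact (by simpa using this : (labels ((t::ts).get ⟨j+1, h⟩)).Sublist (labelsL ts)).trans
        (List.sublist_append_right _ _)

theorem wfL_get {s : ℕ → ℕ} : ∀ {cs : List STree}, wfL s cs → ∀ {j : ℕ} (h : j < cs.length),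
    wf s (cs.get ⟨j, h⟩)
  | [], _, j, h => by simp at h
  | t :: ts, hw, 0, h => hw.1
  | t :: ts, hw, j + 1, h => by
      have := wfL_get hw.2 (j := j) (Nat.lt_of_succ_lt_succ h)
      simpa using this

theorem idxOf_eq_of_mem_get {x : ℕ} : ∀ {cs : List STree}, (labelsL cs).Nodup →
    ∀ {j : ℕ} (h : j < cs.length), mem x (cs.get ⟨j, h⟩) = true → idxOf x cs = j
  | [], _, j, h, _ => by simp at h
  | t :: ts, nd, 0, h, hm => by simp at hm; simp [idxOf, hm]
  | t :: ts, nd, j + 1, h, hm => by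
      rw [show labelsL (t :: ts) = labels t ++ labelsL ts from rfl] at nd
      have hts : mem x (ts.get ⟨j, Nat.lt_of_succ_lt_succ h⟩) = true := by simpa using hm
      have hxts : x ∈ labelsL ts :=
        (memL_iff x ts).1 (memL_of_mem_get _ hts)
      have hxt : ¬ (mem x t = true) := by
        rw [mem_iff]
        intro hx
        exact (List.disjoint_of_nodup_append nd) hx hxts
      rw [idxOf, if_neg hxt, idxOf_eq_of_mem_get (List.Nodup.of_append_right nd) _ hts]

theorem cardL_of_lt {s : ℕ → ℕ} {x y : ℕ} : ∀ {cs : List STree}, memL y cs = true →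
    idxOf x cs < idxOf y cs → cardL s y x cs = 0
  | [], hy, _ => by simp [memL] at hy
  | t :: ts, hy, hlt => by
      rw [show memL y (t :: ts) = (mem y t || memL y ts) from rfl] at hy
      by_cases hyt : mem y t
      · simp [idxOf, hyt] at hlt
      · simp [hyt] at hy
        by_cases hxt : mem x t
        · rw [show cardL s y x (t :: ts) =
            (if mem y t then (if mem x t then card s y x t else if memL x ts then s y else 0)
             else (if mem x t then 0 else cardL s y x ts)) from rfl]
          simp [hyt, hxt]
        · rw [show cardL s y x (t :: ts) =
            (if mem y t then (if mem x t then card s y x t else if memL x ts then s y else 0)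
             else (if mem x t then 0 else cardL s y x ts)) from rfl]
          simp only [idxOf, hyt, hxt, if_false] at hlt ⊢
          exact cardL_of_lt hy (Nat.lt_of_succ_lt_succ hlt)

theorem cardL_of_gt {s : ℕ → ℕ} {x y : ℕ} : ∀ {cs : List STree}, memL x cs = true →
    idxOf y cs < idxOf x cs → cardL s y x cs = s y
  | [], hx, _ => by simp [memL] at hx
  | t :: ts, hx, hlt => by
      rw [show memL x (t :: ts) = (mem x t || memL x ts) from rfl] at hx
      rw [show cardL s y x (t :: ts) =
        (if mem y t then (if mem x t then card s y x t else if memL x ts then s y else 0)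
         else (if mem x t then 0 else cardL s y x ts)) from rfl]
      by_cases hxt : mem x t
      · simp [idxOf, hxt] at hlt
      · simp [hxt] at hx
        by_cases hyt : mem y t
        · simp [hyt, hxt, hx]
        · simp only [idxOf, hyt, hxt, if_false] at hlt ⊢
          exact cardL_of_gt hx (Nat.lt_of_succ_lt_succ hlt)

theorem cardL_of_eq {s : ℕ → ℕ} {x y : ℕ} : ∀ {cs : List STree} (hy : memL y cs = true),
    idxOf x cs = idxOf y cs →
    cardL s y x cs = card s y x (cs.get ⟨idxOf y cs, idxOf_lt_length hy⟩)
  | [], hy, _ => by simp [memL] at hy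
  | t :: ts, hy, heq => by
      rw [show memL y (t :: ts) = (mem y t || memL y ts) from rfl] at hy
      rw [show cardL s y x (t :: ts) =
        (if mem y t then (if mem x t then card s y x t else if memL x ts then s y else 0)
         else (if mem x t then 0 else cardL s y x ts)) from rfl]
      by_cases hyt : mem y t
      · have h0 : idxOf y (t :: ts) = 0 := by simp [idxOf, hyt]
        have hxt : mem x t := by
          by_contra hxt
          rw [h0, idxOf, if_neg hxt] at heq
          simp at heq
        simp only [hyt, hxt, if_true, h0]
        rfl
      · simp [hyt] at hy
        have h1 : idxOf y (t :: ts) = idxOf y ts + 1 := by simp [idxOf, hyt]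
        have hxt : ¬ (mem x t = true) := by
          intro hxt
          rw [h1, idxOf, if_pos hxt] at heq
          simp at heq
        have heq' : idxOf x ts = idxOf y ts := by
          rw [h1, idxOf, if_neg hxt] at heq
          omega
        simp only [hyt, hxt, if_false, h1]
        rw [cardL_of_eq hy heq']
        rfl

end STree

namespace STree

/-- Inversion multiplicity function of a tree, guarded by membership. -/
def gcard (s : ℕ → ℕ) (T : STree) : ℕ → ℕ → ℕ := fun y x =>
  if mem x T = true ∧ mem y T = true ∧ x < y then card s y x T else 0

/-- Generalized decreasing tree over an arbitrary finite label set. -/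
def GWF (s : ℕ → ℕ) (L : Finset ℕ) (T : STree) : Prop :=
  wf s T ∧ (labels T).Nodup ∧ (labels T).toFinset = L

/-- Generalized tree-inversion set over an arbitrary finite label set. -/
def GInv (s : ℕ → ℕ) (L : Finset ℕ) (I : ℕ → ℕ → ℕ) : Prop :=
  (∀ y x, I y x ≤ s y) ∧ (∀ y x, ¬(x ∈ L ∧ y ∈ L ∧ x < y) → I y x = 0) ∧
  (∀ a b c, a ∈ L → b ∈ L → c ∈ L → a < b → b < c → I b a = 0 ∨ I c b ≤ I c a) ∧
  (∀ a b c, a ∈ L → b ∈ L → c ∈ L → a < b → b < c → I b a = s b ∨ I c a ≤ I c b)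

theorem root_struct {s : ℕ → ℕ} {L : Finset ℕ} {T : STree} (hT : GWF s L T)
    (hne : L.Nonempty) :
    ∃ cs, T = .node (L.max' hne) cs ∧ cs.length = s (L.max' hne) + 1 ∧ wfL s cs ∧
      (labelsL cs).Nodup ∧ (∀ x ∈ labelsL cs, x < L.max' hne) ∧
      (∀ x, x ∈ labelsL cs ↔ (x ∈ L ∧ x ≠ L.max' hne)) ∧
      L.card = (labelsL cs).length + 1 := by
  obtain ⟨hw, hnd, hfin⟩ := hT
  cases T with
  | leaf =>
      exfalso
      rw [show labels .leaf = ([] : List ℕ) from rfl] at hfin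
      simp at hfin
      exact hne.ne_empty hfin.symm
  | node a cs =>
      have hlab : labels (.node a cs) = a :: labelsL cs := rfl
      rw [hlab] at hnd hfin
      obtain ⟨hlen, hlt, hwl⟩ := hw
      have haL : a ∈ L := by rw [← hfin]; simp
      have ham : a = L.max' hne := by
        have key : ∀ b ∈ L, b ≤ a := by
          intro b hb
          rw [← hfin] at hb
          simp at hb
          rcases hb with hb | hb
          · omega
          · exact le_of_lt (hlt _ hb)
        exact le_antisymm (L.le_max' a haL) (key _ (L.max'_mem hne))
      have hcard : L.card = (labelsL cs).length + 1 := by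
        rw [← hfin, List.toFinset_card_of_nodup hnd]
        simp
      refine ⟨cs, by rw [ham] , by rw [← ham]; exact hlen, hwl, hnd.of_cons, by rw [← ham]; exact hlt, ?_, hcard⟩
      intro x
      constructor
      · intro hx
        refine ⟨by rw [← hfin]; simp [hx], ?_⟩
        rw [← ham]
        intro hxa
        subst hxa
        exact (List.nodup_cons.1 hnd).1 hx
      · rintro ⟨hxL, hxm⟩
        rw [← hfin] at hxL
        simp at hxL
        rcases hxL with h | h
        · exact absurd (h.trans ham) hxm
        · exact h

section Node

variable {s : ℕ → ℕ} {m : ℕ} {cs : List STree}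
  (hlen : cs.length = s m + 1) (hwl : wfL s cs) (hnd : (labelsL cs).Nodup)
  (hlt : ∀ x ∈ labelsL cs, x < m)

theorem mem_node_iff {x : ℕ} : mem x (.node m cs) = true ↔ (x = m ∨ memL x cs = true) := by
  rw [show mem x (.node m cs) = (x == m || memL x cs) from rfl]
  simp

include hlt in
theorem gcard_root {x : ℕ} (hx : memL x cs = true) :
    gcard s (.node m cs) m x = idxOf x cs := by
  have hxm : x < m := hlt x ((memL_iff x cs).1 hx)
  rw [gcard, if_pos ⟨(mem_node_iff).2 (Or.inr hx), (mem_node_iff).2 (Or.inl rfl), hxm⟩]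
  rw [show card s m x (.node m cs) = (if m = m then idxOf x cs else cardL s m x cs) from rfl]
  simp

include hlt in
theorem card_node_ne {x y : ℕ} (hy : memL y cs = true) :
    card s y x (.node m cs) = cardL s y x cs := by
  have hym : y < m := hlt y ((memL_iff y cs).1 hy)
  rw [show card s y x (.node m cs) = (if m = y then idxOf x cs else cardL s y x cs) from rfl]
  rw [if_neg (by omega)]

include hlt in
theorem gcard_lt {x y : ℕ} (hx : memL x cs = true) (hy : memL y cs = true) (hxy : x < y)
    (hij : idxOf x cs < idxOf y cs) : gcard s (.node m cs) y x = 0 := by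
  rw [gcard, if_pos ⟨(mem_node_iff).2 (Or.inr hx), (mem_node_iff).2 (Or.inr hy), hxy⟩,
    card_node_ne hlt hy, cardL_of_lt hy hij]

include hlt in
theorem gcard_gt {x y : ℕ} (hx : memL x cs = true) (hy : memL y cs = true) (hxy : x < y)
    (hij : idxOf y cs < idxOf x cs) : gcard s (.node m cs) y x = s y := by
  rw [gcard, if_pos ⟨(mem_node_iff).2 (Or.inr hx), (mem_node_iff).2 (Or.inr hy), hxy⟩,
    card_node_ne hlt hy, cardL_of_gt hx hij]

include hnd in
theorem mem_get_char {x : ℕ} {j : ℕ} (h : j < cs.length) :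
    mem x (cs.get ⟨j, h⟩) = true ↔ (memL x cs = true ∧ idxOf x cs = j) := by
  constructor
  · intro hx
    exact ⟨memL_of_mem_get h hx, idxOf_eq_of_mem_get hnd h hx⟩
  · rintro ⟨hx, rfl⟩
    exact mem_get_idxOf hx

include hnd hlt in
theorem gcard_sub {j : ℕ} (h : j < cs.length) :
    gcard s (cs.get ⟨j, h⟩) = fun y x =>
      if mem x (cs.get ⟨j, h⟩) = true ∧ mem y (cs.get ⟨j, h⟩) = true ∧ x < y then
        gcard s (.node m cs) y x else 0 := by
  funext y x
  by_cases hg : mem x (cs.get ⟨j, h⟩) = true ∧ mem y (cs.get ⟨j, h⟩) = true ∧ x < y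
  · obtain ⟨hx, hy, hxy⟩ := hg
    rw [if_pos ⟨hx, hy, hxy⟩, gcard, if_pos ⟨hx, hy, hxy⟩]
    obtain ⟨hxL, hxj⟩ := (mem_get_char hnd h).1 hx
    obtain ⟨hyL, hyj⟩ := (mem_get_char hnd h).1 hy
    rw [gcard, if_pos ⟨(mem_node_iff).2 (Or.inr hxL), (mem_node_iff).2 (Or.inr hyL), hxy⟩,
      card_node_ne hlt hyL, cardL_of_eq hyL (by omega)]
    have heq : (⟨idxOf y cs, idxOf_lt_length hyL⟩ : Fin cs.length) = ⟨j, h⟩ := Fin.ext hyj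
    rw [heq]
  · rw [if_neg hg, gcard, if_neg hg]

include hwl hnd in
theorem GWF_sub {j : ℕ} (h : j < cs.length) :
    GWF s ((labels (cs.get ⟨j, h⟩)).toFinset) (cs.get ⟨j, h⟩) :=
  ⟨wfL_get hwl h, (hnd.sublist (labels_get_sublist h)), rfl⟩

end Node

end STree

namespace STree

theorem memL_iff_exists {x : ℕ} : ∀ {cs : List STree},
    memL x cs = true ↔ ∃ t ∈ cs, mem x t = true
  | [] => by simp [memL]
  | t :: ts => by
      rw [show memL x (t :: ts) = (mem x t || memL x ts) from rfl]
      simp [memL_iff_exists (cs := ts)]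

theorem wfL_iff_forall {s : ℕ → ℕ} : ∀ {cs : List STree},
    wfL s cs ↔ ∀ t ∈ cs, wf s t
  | [] => by simp [wfL]
  | t :: ts => by
      rw [show wfL s (t :: ts) = (wf s t ∧ wfL s ts) from rfl]
      simp [wfL_iff_forall (cs := ts)]

theorem labelsL_nodup_of {cs : List STree}
    (h1 : ∀ t ∈ cs, (labels t).Nodup)
    (h2 : List.Pairwise (fun t u => ∀ x, mem x t = true → mem x u = true → False) cs) :
    (labelsL cs).Nodup := by
  induction cs with
  | nil => simp [labelsL]
  | cons t ts ihc =>
      rw [show labelsL (t :: ts) = labels t ++ labelsL ts from rfl]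
      refine List.Nodup.append (h1 t (by simp)) (ihc (fun u hu => h1 u (by simp [hu])) h2.of_cons) ?_
      intro x hx hx'
      obtain ⟨u, hu, hxu⟩ := memL_iff_exists.1 ((memL_iff x ts).2 hx')
      exact (List.pairwise_cons.1 h2).1 u hu x ((mem_iff x t).2 hx) hxu

theorem mem_labelsL_of_mem {x : ℕ} {t : STree} {cs : List STree} (ht : t ∈ cs)
    (hx : x ∈ labels t) : x ∈ labelsL cs := by
  refine (memL_iff x cs).1 (memL_iff_exists.2 ⟨t, ht, (mem_iff x t).2 hx⟩)

end STree

namespace STree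

theorem GWF_empty_iff {s : ℕ → ℕ} {T : STree} : GWF s ∅ T ↔ T = .leaf := by
  constructor
  · rintro ⟨hw, hnd, hfin⟩
    refine eq_leaf_of_labels_nil ?_
    rcases List.eq_nil_or_concat (labels T) with h | ⟨l, x, h⟩
    · exact h
    · exfalso
      have : x ∈ (labels T).toFinset := by simp [h]
      rw [hfin] at this
      simp at this
  · rintro rfl
    exact ⟨trivial, by simp [labels], by simp [labels]⟩

theorem gcard_leaf {s : ℕ → ℕ} : gcard s .leaf = fun _ _ => 0 := by
  funext y x
  rw [gcard, if_neg]
  rintro ⟨hx, -, -⟩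
  simp [mem] at hx

theorem GInv_empty {s : ℕ → ℕ} {I : ℕ → ℕ → ℕ} (h : GInv s ∅ I) : I = fun _ _ => 0 := by
  funext y x
  exact h.2.1 y x (by simp)

section Node

variable {s : ℕ → ℕ} {m : ℕ} {cs : List STree}
  (hlen : cs.length = s m + 1) (hwl : wfL s cs) (hnd : (labelsL cs).Nodup)
  (hlt : ∀ x ∈ labelsL cs, x < m)

include hnd hlt in
theorem gcard_eq_sub' {x y j : ℕ} (h : j < cs.length) (hx : memL x cs = true)
    (hy : memL y cs = true) (hxy : x < y) (hxj : idxOf x cs = j) (hyj : idxOf y cs = j) :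
    gcard s (.node m cs) y x = gcard s (cs.get ⟨j, h⟩) y x := by
  have heq := congrFun (congrFun (gcard_sub (s := s) hnd hlt h) y) x
  rw [heq]
  rw [if_pos ⟨(mem_get_char hnd h).2 ⟨hx, hxj⟩, (mem_get_char hnd h).2 ⟨hy, hyj⟩, hxy⟩]

include hnd in
theorem mem_toFinset_get {x j : ℕ} (h : j < cs.length) (hx : memL x cs = true)
    (hxj : idxOf x cs = j) : x ∈ (labels (cs.get ⟨j, h⟩)).toFinset := by
  rw [List.mem_toFinset, ← mem_iff]
  exact (mem_get_char hnd h).2 ⟨hx, hxj⟩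

include hlen hwl hnd hlt in
theorem GInv_node {L : Finset ℕ}
    (hmem : ∀ x, memL x cs = true ↔ (x ∈ L ∧ x ≠ m)) (hmL : m ∈ L)
    (hmax : ∀ b ∈ L, b ≤ m)
    (hIH : ∀ (j : ℕ) (h : j < cs.length),
      GInv s ((labels (cs.get ⟨j, h⟩)).toFinset) (gcard s (cs.get ⟨j, h⟩))) :
    GInv s L (gcard s (.node m cs)) := by
  have hmemT : ∀ x, mem x (.node m cs) = true ↔ x ∈ L := by
    intro x
    rw [mem_node_iff]
    constructor
    · rintro (rfl | hx)
      · exact hmL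
      · exact ((hmem x).1 hx).1
    · intro hx
      by_cases hxm : x = m
      · exact Or.inl hxm
      · exact Or.inr ((hmem x).2 ⟨hx, hxm⟩)
  have hltm : ∀ {x : ℕ}, x ∈ L → x ≠ m → x < m := fun hx hxm =>
    lt_of_le_of_ne (hmax _ hx) hxm
  have hmemL : ∀ {x : ℕ}, x ∈ L → x ≠ m → memL x cs = true := fun hx hxm =>
    (hmem _).2 ⟨hx, hxm⟩
  refine ⟨?_, ?_, ?_, ?_⟩
  · -- bound
    intro y x
    by_cases hg : mem x (.node m cs) = true ∧ mem y (.node m cs) = true ∧ x < y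
    · obtain ⟨hx, hy, hxy⟩ := hg
      have hxL := (hmemT x).1 hx
      have hyL := (hmemT y).1 hy
      by_cases hym : y = m
      · have hxm : x ≠ m := by omega
        rw [hym, gcard_root hlt (hmemL hxL hxm)]
        have := idxOf_lt_length (hmemL hxL hxm)
        omega
      · have hym' := hltm hyL hym
        have hxm : x ≠ m := by omega
        have hmx := hmemL hxL hxm
        have hmy := hmemL hyL hym
        rcases lt_trichotomy (idxOf x cs) (idxOf y cs) with h1 | h1 | h1
        · rw [gcard_lt hlt hmx hmy hxy h1]
          exact Nat.zero_le _
        · rw [gcard_eq_sub' hnd hlt (idxOf_lt_length hmy) hmx hmy hxy h1 rfl]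
          exact (hIH _ _).1 y x
        · rw [gcard_gt hlt hmx hmy hxy h1]
    · rw [gcard, if_neg hg]
      exact Nat.zero_le _
  · -- support
    intro y x hns
    rw [gcard, if_neg]
    rintro ⟨hx, hy, hxy⟩
    exact hns ⟨(hmemT x).1 hx, (hmemT y).1 hy, hxy⟩
  · -- transitivity
    intro a b c haL hbL hcL hab hbc
    have hcm' := hmax c hcL
    have ham : a ≠ m := by omega
    have hbm : b ≠ m := by omega
    have hma := hmemL haL ham
    have hmb := hmemL hbL hbm
    by_cases hcm : c = m
    · subst hcm
      rcases lt_trichotomy (idxOf a cs) (idxOf b cs) with h1 | h1 | h1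
      · exact Or.inl (gcard_lt hlt hma hmb hab h1)
      · refine Or.inr ?_
        rw [gcard_root hlt hmb, gcard_root hlt hma]
        omega
      · refine Or.inr ?_
        rw [gcard_root hlt hmb, gcard_root hlt hma]
        omega
    · have hmc := hmemL hcL hcm
      rcases lt_trichotomy (idxOf a cs) (idxOf b cs) with h1 | h1 | h1
      · exact Or.inl (gcard_lt hlt hma hmb hab h1)
      · -- idxOf a = idxOf b
        rcases lt_trichotomy (idxOf b cs) (idxOf c cs) with h2 | h2 | h2
        · refine Or.inr ?_
          rw [gcard_lt hlt hmb hmc hbc h2]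
          exact Nat.zero_le _
        · -- all in the same block
          have h := idxOf_lt_length hmc
          rw [gcard_eq_sub' hnd hlt h hma hmb hab (by omega) (by omega),
            gcard_eq_sub' hnd hlt h hmb hmc hbc (by omega) (by omega),
            gcard_eq_sub' hnd hlt h hma hmc (by omega) (by omega) (by omega)]
          exact (hIH _ h).2.2.1 a b c (mem_toFinset_get hnd h hma (by omega))
            (mem_toFinset_get hnd h hmb (by omega))
            (mem_toFinset_get hnd h hmc (by omega)) hab hbc
        · refine Or.inr ?_
          rw [gcard_gt hlt hmb hmc hbc h2, gcard_gt hlt hma hmc (by omega) (by omega)]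
      · -- idxOf b < idxOf a
        refine Or.inr ?_
        rcases lt_trichotomy (idxOf b cs) (idxOf c cs) with h2 | h2 | h2
        · rw [gcard_lt hlt hmb hmc hbc h2]
          exact Nat.zero_le _
        · have h := idxOf_lt_length hmc
          rw [gcard_eq_sub' hnd hlt h hmb hmc hbc (by omega) (by omega),
            gcard_gt hlt hma hmc (by omega) (by omega)]
          exact (hIH _ h).1 c b
        · rw [gcard_gt hlt hmb hmc hbc h2, gcard_gt hlt hma hmc (by omega) (by omega)]
  · -- planarity
    intro a b c haL hbL hcL hab hbc
    have hcm' := hmax c hcL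
    have ham : a ≠ m := by omega
    have hbm : b ≠ m := by omega
    have hma := hmemL haL ham
    have hmb := hmemL hbL hbm
    by_cases hcm : c = m
    · subst hcm
      rcases lt_trichotomy (idxOf a cs) (idxOf b cs) with h1 | h1 | h1
      · refine Or.inr ?_
        rw [gcard_root hlt hmb, gcard_root hlt hma]
        omega
      · refine Or.inr ?_
        rw [gcard_root hlt hmb, gcard_root hlt hma]
        omega
      · exact Or.inl (gcard_gt hlt hma hmb hab h1)
    · have hmc := hmemL hcL hcm
      rcases lt_trichotomy (idxOf a cs) (idxOf b cs) with h1 | h1 | h1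
      · -- idxOf a < idxOf b : show I c a ≤ I c b
        refine Or.inr ?_
        rcases lt_trichotomy (idxOf a cs) (idxOf c cs) with h2 | h2 | h2
        · rw [gcard_lt hlt hma hmc (by omega) h2]
          exact Nat.zero_le _
        · have h := idxOf_lt_length hmc
          rw [gcard_eq_sub' hnd hlt h hma hmc (by omega) (by omega) (by omega),
            gcard_gt hlt hmb hmc hbc (by omega)]
          exact (hIH _ h).1 c a
        · rw [gcard_gt hlt hma hmc (by omega) (by omega),
            gcard_gt hlt hmb hmc hbc (by omega)]
      · -- idxOf a = idxOf b
        rcases lt_trichotomy (idxOf a cs) (idxOf c cs) with h2 | h2 | h2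
        · refine Or.inr ?_
          rw [gcard_lt hlt hma hmc (by omega) h2]
          exact Nat.zero_le _
        · have h := idxOf_lt_length hmc
          rcases (hIH _ h).2.2.2 a b c (mem_toFinset_get hnd h hma (by omega))
            (mem_toFinset_get hnd h hmb (by omega))
            (mem_toFinset_get hnd h hmc (by omega)) hab hbc with hp | hp
          · refine Or.inl ?_
            rw [gcard_eq_sub' hnd hlt h hma hmb hab (by omega) (by omega)]
            exact hp
          · refine Or.inr ?_
            rw [gcard_eq_sub' hnd hlt h hma hmc (by omega) (by omega) (by omega),
              gcard_eq_sub' hnd hlt h hmb hmc hbc (by omega) (by omega)]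
            exact hp
        · refine Or.inr ?_
          rw [gcard_gt hlt hma hmc (by omega) (by omega),
            gcard_gt hlt hmb hmc hbc (by omega)]
      · exact Or.inl (gcard_gt hlt hma hmb hab h1)

end Node

end STree

namespace STree

theorem gmain_empty {s : ℕ → ℕ} :
    Set.BijOn (gcard s) {T : STree | GWF s ∅ T} {I | GInv s ∅ I} := by
  refine ⟨?_, ?_, ?_⟩
  · intro T hT
    rw [Set.mem_setOf_eq] at hT ⊢
    rw [GWF_empty_iff.1 hT, gcard_leaf]
    exact ⟨fun _ _ => Nat.zero_le _, fun _ _ _ => rfl, fun _ _ _ _ _ _ _ _ => Or.inl rfl,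
      fun _ _ _ _ _ _ _ _ => Or.inr (le_refl _)⟩
  · intro T hT T' hT' _
    rw [GWF_empty_iff.1 hT, GWF_empty_iff.1 hT']
  · intro I hI
    exact ⟨.leaf, GWF_empty_iff.2 rfl, by rw [gcard_leaf, GInv_empty hI]⟩

theorem gmain (s : ℕ → ℕ) : ∀ (N : ℕ) (L : Finset ℕ), L.card ≤ N →
    Set.BijOn (gcard s) {T : STree | GWF s L T} {I | GInv s L I} := by
  intro N
  induction N with
  | zero =>
      intro L hL
      rw [Finset.card_eq_zero.1 (Nat.le_zero.1 hL)]
      exact gmain_empty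
  | succ N ih =>
      intro L hL
      rcases L.eq_empty_or_nonempty with rfl | hne
      · exact gmain_empty
      · have hmL := L.max'_mem hne
        have hmax : ∀ b ∈ L, b ≤ L.max' hne := fun b hb => L.le_max' b hb
        refine ⟨?_, ?_, ?_⟩
        · -- MapsTo
          intro T hT
          obtain ⟨cs, rfl, hlen, hwl, hnd, hlt, hmem, hcard⟩ := root_struct hT hne
          have hmem' : ∀ x, memL x cs = true ↔ (x ∈ L ∧ x ≠ L.max' hne) :=
            fun x => (memL_iff x cs).trans (hmem x)
          refine GInv_node hlen hwl hnd hlt hmem' hmL hmax ?_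
          intro j h
          have hsub := GWF_sub (s := s) hwl hnd h
          have hcardle : ((labels (cs.get ⟨j, h⟩)).toFinset).card ≤ N := by
            rw [List.toFinset_card_of_nodup hsub.2.1]
            have hl1 : (labels (cs.get ⟨j, h⟩)).length ≤ (labelsL cs).length :=
              (labels_get_sublist h).length_le
            omega
          exact (ih _ hcardle).mapsTo hsub
        · -- InjOn
          intro T hT T' hT' hI
          rw [Set.mem_setOf_eq] at hT hT'
          obtain ⟨cs, rfl, hlen, hwl, hnd, hlt, hmem, hcard⟩ := root_struct hT hne
          obtain ⟨cs', rfl, hlen', hwl', hnd', hlt', hmem', hcard'⟩ := root_struct hT' hne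
          suffices h : cs = cs' by rw [h]
          apply List.ext_get (by omega)
          intro j h h'
          have hmm : ∀ x, memL x cs = true ↔ memL x cs' = true := fun x => by
            rw [memL_iff, hmem, ← hmem', ← memL_iff]
          have hidx : ∀ x, memL x cs = true → idxOf x cs = idxOf x cs' := by
            intro x hx
            have hx' : memL x cs' = true := (hmm x).1 hx
            have e1 := gcard_root (s := s) hlt hx
            have e2 := gcard_root (s := s) hlt' hx'
            rw [← e1, ← e2, hI]
          have hmemget : ∀ x, mem x (cs.get ⟨j, h⟩) = true ↔ mem x (cs'.get ⟨j, h'⟩) = true := by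
            intro x
            rw [mem_get_char hnd h, mem_get_char hnd' h']
            constructor
            · rintro ⟨hx, hj⟩
              exact ⟨(hmm x).1 hx, by rw [← hidx x hx]; exact hj⟩
            · rintro ⟨hx', hj⟩
              have hx := (hmm x).2 hx'
              exact ⟨hx, by rw [hidx x hx]; exact hj⟩
          have hfin : (labels (cs.get ⟨j, h⟩)).toFinset = (labels (cs'.get ⟨j, h'⟩)).toFinset := by
            ext x
            rw [List.mem_toFinset, List.mem_toFinset, ← mem_iff, ← mem_iff]
            exact ⟨fun hx => (hmemget x).1 hx, fun hx => (hmemget x).2 hx⟩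
          have hgc : gcard s (cs.get ⟨j, h⟩) = gcard s (cs'.get ⟨j, h'⟩) := by
            rw [gcard_sub (s := s) hnd hlt h, gcard_sub (s := s) hnd' hlt' h']
            funext y x
            by_cases hg : mem x (cs.get ⟨j, h⟩) = true ∧ mem y (cs.get ⟨j, h⟩) = true ∧ x < y
            · rw [if_pos hg, if_pos ⟨(hmemget x).1 hg.1, (hmemget y).1 hg.2.1, hg.2.2⟩, hI]
            · rw [if_neg hg,
                if_neg (mt (fun hh => ⟨(hmemget x).2 hh.1, (hmemget y).2 hh.2.1, hh.2.2⟩) hg)]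
          have hsub := GWF_sub (s := s) hwl hnd h
          have hsub' := GWF_sub (s := s) hwl' hnd' h'
          rw [← hfin] at hsub'
          have hcardle : ((labels (cs.get ⟨j, h⟩)).toFinset).card ≤ N := by
            rw [List.toFinset_card_of_nodup hsub.2.1]
            have hl1 : (labels (cs.get ⟨j, h⟩)).length ≤ (labelsL cs).length :=
              (labels_get_sublist h).length_le
            omega
          exact (ih _ hcardle).injOn hsub hsub' hgc
        · -- SurjOn
          intro I hI
          rw [Set.mem_setOf_eq] at hI
          obtain ⟨hbnd, hsup, htr, hpl⟩ := hI
          classical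
          set m := L.max' hne with hm
          set B : ℕ → Finset ℕ := fun j => L.filter (fun x => x ≠ m ∧ I m x = j) with hB
          have hBmem : ∀ j x, x ∈ B j ↔ (x ∈ L ∧ x ≠ m ∧ I m x = j) := by
            intro j x
            simp [hB, Finset.mem_filter, and_assoc]
          have hBcard : ∀ j, (B j).card ≤ N := by
            intro j
            have h1 : B j ⊆ L.erase m := by
              intro x hx
              rw [hBmem] at hx
              exact Finset.mem_erase.2 ⟨hx.2.1, hx.1⟩
            have h2 := Finset.card_le_card h1
            have h3 : (L.erase m).card < L.card := Finset.card_erase_lt_of_mem hmL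
            omega
          have hBI : ∀ j, GInv s (B j) (fun y x => if x ∈ B j ∧ y ∈ B j ∧ x < y then I y x else 0) := by
            intro j
            refine ⟨?_, ?_, ?_, ?_⟩
            · intro y x
              dsimp only
              split
              · exact hbnd y x
              · exact Nat.zero_le _
            · intro y x hh
              exact if_neg hh
            · intro a b c ha hb hc hab hbc
              dsimp only
              have haL := ((hBmem j a).1 ha).1
              have hbL := ((hBmem j b).1 hb).1
              have hcL := ((hBmem j c).1 hc).1
              rcases htr a b c haL hbL hcL hab hbc with hh | hh
              · exact Or.inl (by rw [if_pos ⟨ha, hb, hab⟩]; exact hh)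
              · exact Or.inr (by rw [if_pos ⟨hb, hc, hbc⟩, if_pos ⟨ha, hc, by omega⟩]; exact hh)
            · intro a b c ha hb hc hab hbc
              dsimp only
              have haL := ((hBmem j a).1 ha).1
              have hbL := ((hBmem j b).1 hb).1
              have hcL := ((hBmem j c).1 hc).1
              rcases hpl a b c haL hbL hcL hab hbc with hh | hh
              · exact Or.inl (by rw [if_pos ⟨ha, hb, hab⟩]; exact hh)
              · exact Or.inr (by rw [if_pos ⟨ha, hc, by omega⟩, if_pos ⟨hb, hc, hbc⟩]; exact hh)
          choose Tf hTf1 hTf2 using fun j : Fin (s m + 1) =>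
            (Set.mem_image _ _ _).1 ((ih (B j.1) (hBcard j.1)).surjOn (hBI j.1))
          set cs := List.ofFn Tf with hcs
          have hlen : cs.length = s m + 1 := by simp [hcs]
          have hget : ∀ (j : ℕ) (h : j < cs.length),
              cs.get ⟨j, h⟩ = Tf ⟨j, hlen ▸ h⟩ := by
            intro j h
            rw [List.get_of_eq hcs ⟨j, h⟩, List.get_ofFn]
            exact congrArg Tf (Fin.ext rfl)
          have hTf1' : ∀ j, GWF s (B j.1) (Tf j) := fun j => hTf1 j
          have hmemt : ∀ (j : Fin (s m + 1)) (x : ℕ), mem x (Tf j) = true ↔ x ∈ B j.1 := by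
            intro j x
            obtain ⟨hw, hnd, hfin⟩ := hTf1' j
            rw [mem_iff, ← List.mem_toFinset, hfin]
          have hmemcs : ∀ x, memL x cs = true ↔ (x ∈ L ∧ x ≠ m) := by
            intro x
            rw [memL_iff_exists]
            constructor
            · rintro ⟨t, ht, hxt⟩
              obtain ⟨j, rfl⟩ := List.mem_ofFn.1 ht
              have := ((hBmem j.1 x).1 ((hmemt j x).1 hxt))
              exact ⟨this.1, this.2.1⟩
            · rintro ⟨hxL, hxm⟩
              have hjb : I m x ≤ s m := hbnd m x
              refine ⟨Tf ⟨I m x, by omega⟩, ?_, (hmemt _ x).2 ((hBmem _ x).2 ⟨hxL, hxm, rfl⟩)⟩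
              exact List.mem_ofFn.2 ⟨⟨I m x, by omega⟩, rfl⟩
          have hltm : ∀ x ∈ labelsL cs, x < m := by
            intro x hx
            have h1 := (hmemcs x).1 ((memL_iff x cs).2 hx)
            exact lt_of_le_of_ne (hmax x h1.1) h1.2
          have hwl : wfL s cs := by
            rw [wfL_iff_forall]
            intro t ht
            obtain ⟨j, rfl⟩ := List.mem_ofFn.1 ht
            exact (hTf1' j).1
          have hnd : (labelsL cs).Nodup := by
            refine labelsL_nodup_of ?_ ?_
            · intro t ht
              obtain ⟨j, rfl⟩ := List.mem_ofFn.1 ht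
              exact (hTf1' j).2.1
            · rw [List.pairwise_iff_get]
              intro i j hij x hxi hxj
              rw [hget i.1 i.2] at hxi
              rw [hget j.1 j.2] at hxj
              have hij' : i.1 < j.1 := hij
              have e1 : I m x = i.1 := ((hBmem _ x).1 ((hmemt _ x).1 hxi)).2.2
              have e2 : I m x = j.1 := ((hBmem _ x).1 ((hmemt _ x).1 hxj)).2.2
              omega
          have hidxI : ∀ x, x ∈ L → x ≠ m → idxOf x cs = I m x := by
            intro x hxL hxm
            have hjb : I m x ≤ s m := hbnd m x
            have hj : I m x < cs.length := by omega
            refine idxOf_eq_of_mem_get hnd hj ?_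
            rw [hget _ hj]
            exact (hmemt _ x).2 ((hBmem _ x).2 ⟨hxL, hxm, rfl⟩)
          refine ⟨.node m cs, ?_, ?_⟩
          · refine ⟨⟨hlen, fun b hb => hltm b hb, hwl⟩, ?_, ?_⟩
            · rw [show labels (.node m cs) = m :: labelsL cs from rfl]
              refine List.nodup_cons.2 ⟨fun hc => absurd (hltm m hc) (by omega), hnd⟩
            · rw [show labels (.node m cs) = m :: labelsL cs from rfl]
              ext x
              simp only [List.toFinset_cons, Finset.mem_insert, List.mem_toFinset]
              constructor
              · rintro (rfl | hx)
                · exact hmL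
                · exact ((hmemcs x).1 ((memL_iff x cs).2 hx)).1
              · intro hx
                by_cases hxm : x = m
                · exact Or.inl hxm
                · exact Or.inr ((memL_iff x cs).1 ((hmemcs x).2 ⟨hx, hxm⟩))
          · funext y x
            have hmemT : ∀ z, mem z (.node m cs) = true ↔ z ∈ L := by
              intro z
              rw [mem_node_iff]
              constructor
              · rintro (rfl | hz)
                · exact hmL
                · exact ((hmemcs z).1 hz).1
              · intro hz
                by_cases hzm : z = m
                · exact Or.inl hzm
                · exact Or.inr ((hmemcs z).2 ⟨hz, hzm⟩)
            by_cases hg : x ∈ L ∧ y ∈ L ∧ x < y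
            · obtain ⟨hxL, hyL, hxy⟩ := hg
              by_cases hym : y = m
              · have hxm : x ≠ m := by
                  have := hmax x hxL
                  omega
                rw [hym, gcard_root hltm ((hmemcs x).2 ⟨hxL, hxm⟩), hidxI x hxL hxm]
              · have hym' : y < m := lt_of_le_of_ne (hmax y hyL) hym
                have hxm : x ≠ m := by omega
                have hmx := (hmemcs x).2 ⟨hxL, hxm⟩
                have hmy := (hmemcs y).2 ⟨hyL, hym⟩
                rcases lt_trichotomy (I m x) (I m y) with h1 | h1 | h1
                · rw [gcard_lt hltm hmx hmy hxy (by rw [hidxI x hxL hxm, hidxI y hyL hym]; omega)]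
                  rcases htr x y m hxL hyL hmL hxy hym' with hh | hh
                  · exact hh.symm
                  · omega
                · have hjb : I m y ≤ s m := hbnd m y
                  have hj : I m y < cs.length := by omega
                  rw [gcard_eq_sub' hnd hltm hj hmx hmy hxy
                    (by rw [hidxI x hxL hxm]; omega) (by rw [hidxI y hyL hym]),
                    hget _ hj, hTf2 ⟨I m y, by omega⟩]
                  dsimp only
                  rw [if_pos ⟨(hBmem _ x).2 ⟨hxL, hxm, h1⟩, (hBmem _ y).2 ⟨hyL, hym, rfl⟩, hxy⟩]
                · rw [gcard_gt hltm hmx hmy hxy (by rw [hidxI x hxL hxm, hidxI y hyL hym]; omega)]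
                  rcases hpl x y m hxL hyL hmL hxy hym' with hh | hh
                  · exact hh.symm
                  · omega
            · rw [hsup y x hg, gcard, if_neg]
              rintro ⟨hx, hy, hxy⟩
              exact hg ⟨(hmemT x).1 hx, (hmemT y).1 hy, hxy⟩

end STree

namespace STree

theorem treeInv_eq_gcard {n : ℕ} {s : ℕ → ℕ} {T : STree}
    (hmemT : ∀ x, mem x T = true ↔ (1 ≤ x ∧ x ≤ n)) : gcard s T = treeInv n s T := by
  funext y x
  rw [gcard, treeInv]
  by_cases hg : 1 ≤ x ∧ x < y ∧ y ≤ n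
  · rw [if_pos hg, if_pos ⟨(hmemT x).2 ⟨hg.1, by omega⟩, (hmemT y).2 ⟨by omega, hg.2.2⟩, hg.2.1⟩]
  · rw [if_neg hg, if_neg ?_]
    rintro ⟨hx, hy, hxy⟩
    rw [hmemT] at hx hy
    exact hg ⟨hx.1, hxy, hy.2⟩

end STree

open STree in
/-- The map sending an `s`-decreasing tree to its multiset of tree-inversions is
a bijection between `s`-decreasing trees and `s`-tree-inversion sets. -/
theorem treeInv_bijOn (n : ℕ) (s : ℕ → ℕ) :
    Set.BijOn (treeInv n s)
      {T : STree | IsSDecreasingTree n s T}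
      {I : ℕ → ℕ → ℕ | IsTreeInvSet n s I} := by
  classical
  set R : Finset ℕ := (List.range' 1 n).toFinset with hR
  have hmemR : ∀ x, x ∈ R ↔ (1 ≤ x ∧ x ≤ n) := by
    intro x
    rw [hR, List.mem_toFinset, List.mem_range'_1]
    omega
  have hsets : {T : STree | IsSDecreasingTree n s T} = {T | GWF s R T} := by
    ext T
    simp only [Set.mem_setOf_eq, IsSDecreasingTree, GWF]
    constructor
    · rintro ⟨hw, hp⟩
      refine ⟨hw, hp.nodup_iff.2 (List.nodup_range' (s := 1) (n := n)), ?_⟩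
      rw [hR]
      exact List.toFinset_eq_of_perm _ _ hp
    · rintro ⟨hw, hnd, hfin⟩
      refine ⟨hw, (List.perm_ext_iff_of_nodup hnd (List.nodup_range' (s := 1) (n := n))).2 ?_⟩
      intro a
      rw [← List.mem_toFinset, hfin, hR, List.mem_toFinset]
  have hinvs : {I : ℕ → ℕ → ℕ | IsTreeInvSet n s I} = {I | GInv s R I} := by
    ext I
    simp only [Set.mem_setOf_eq, IsTreeInvSet, IsMultiInvSet, InvTransitive, InvPlanar, GInv]
    constructor
    · rintro ⟨⟨hbnd, hsup⟩, htr, hpl⟩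
      refine ⟨hbnd, ?_, ?_, ?_⟩
      · intro y x h
        apply hsup
        rintro ⟨h1, h2, h3⟩
        exact h ⟨(hmemR x).2 ⟨h1, by omega⟩, (hmemR y).2 ⟨by omega, h3⟩, h2⟩
      · intro a b c _ _ _ hab hbc
        exact htr a b c hab hbc
      · intro a b c _ _ _ hab hbc
        exact hpl a b c hab hbc
    · rintro ⟨hbnd, hsup, htr, hpl⟩
      refine ⟨⟨hbnd, ?_⟩, ?_, ?_⟩
      · intro y x h
        apply hsup
        rintro ⟨hx, hy, hxy⟩
        rw [hmemR] at hx hy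
        exact h ⟨hx.1, hxy, hy.2⟩
      · intro a b c hab hbc
        by_cases hin : 1 ≤ a ∧ c ≤ n
        · exact htr a b c ((hmemR a).2 ⟨hin.1, by omega⟩) ((hmemR b).2 ⟨by omega, by omega⟩)
            ((hmemR c).2 ⟨by omega, hin.2⟩) hab hbc
        · rcases Nat.lt_or_ge a 1 with h0 | h1
          · refine Or.inl (hsup b a ?_)
            rintro ⟨ha, -, -⟩
            rw [hmemR] at ha
            omega
          · have hcn : n < c := by omega
            refine Or.inr ?_
            have h2 : I c b = 0 := hsup c b (by
              rintro ⟨-, hcR, -⟩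
              rw [hmemR] at hcR
              omega)
            rw [h2]
            exact Nat.zero_le _
      · intro a b c hab hbc
        by_cases hin : 1 ≤ a ∧ c ≤ n
        · exact hpl a b c ((hmemR a).2 ⟨hin.1, by omega⟩) ((hmemR b).2 ⟨by omega, by omega⟩)
            ((hmemR c).2 ⟨by omega, hin.2⟩) hab hbc
        · refine Or.inr ?_
          have h2 : I c a = 0 := hsup c a (by
            rintro ⟨haR, hcR, -⟩
            rw [hmemR] at haR hcR
            omega)
          rw [h2]
          exact Nat.zero_le _
  have heq : Set.EqOn (gcard s) (treeInv n s) {T : STree | GWF s R T} := by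
    intro T hT
    obtain ⟨hw, hnd, hfin⟩ := hT
    refine treeInv_eq_gcard ?_
    intro x
    rw [mem_iff, ← List.mem_toFinset, hfin, hmemR]
  rw [hsets, hinvs]
  exact Set.BijOn.congr (gmain s R.card R le_rfl) heq
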